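/- For every natural number n ≥ 1 and real numbers a_1, ..., a_n, with the conventions a_0 := 0 and a_{n+1} := 0, we have ∑_{k=1}^{n+1} (a_k - a_{k-1})² ≥ 2(1 - cos(π/(n+1))) · ∑_{k=1}^{n} a_k². -/

import Mathlib

open Real Finset

/-- Fan–Taussky–Todd inequality:
for `a₁, …, aₙ` with `a₀ = a_{n+1} = 0`,
`∑_{k=1}^{n+1} (a_k - a_{k-1})² ≥ 2(1 - cos(π/(n+1))) ∑_{k=1}^n a_k²`. -/
theorem ftt_one (n : ℕ) (hn : 1 ≤ n) (a : ℕ → ℝ) (h0 : a 0 = 0) (hn1 : a (n + 1) = 0) :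
    ∑ k ∈ Finset.Icc 1 (n + 1), (a k - a (k - 1)) ^ 2 ≥
      2 * (1 - Real.cos (π / (n + 1))) * ∑ k ∈ Finset.Icc 1 n, a k ^ 2 := by
  set θ : ℝ := π / (n + 1) with hθ
  set w : ℕ → ℝ := fun k => Real.sin (k * θ) with hw
  have hn1pos : (0:ℝ) < (n:ℝ) + 1 := by positivity
  have hθpos : 0 < θ := by
    rw [hθ]; exact div_pos Real.pi_pos hn1pos
  -- positivity of weights
  have hwpos : ∀ k : ℕ, 1 ≤ k → k ≤ n → 0 < w k := by
    intro k h1 h2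
    apply Real.sin_pos_of_pos_of_lt_pi
    · positivity
    · rw [hθ]
      calc (k:ℝ) * (π / (n+1)) < ((n:ℝ)+1) * (π / (n+1)) := by
            apply mul_lt_mul_of_pos_right _ (div_pos Real.pi_pos hn1pos)
            exact_mod_cast Nat.lt_succ_of_le h2
        _ = π := by field_simp
  have hw0 : w 0 = 0 := by simp [hw]
  have hwn1 : w (n+1) = 0 := by
    have : ((n:ℝ)+1) * θ = π := by rw [hθ]; field_simp
    simp [hw]
    rw [this, Real.sin_pi]
  -- recurrence
  have hrec : ∀ i : ℕ, w i + w (i+2) = 2 * Real.cos θ * w (i+1) := by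
    intro i
    have h1 : ((i:ℝ)) * θ = ((i:ℝ)+1) * θ - θ := by ring
    have h2 : ((i:ℝ)+2) * θ = ((i:ℝ)+1) * θ + θ := by ring
    simp only [hw]
    push_cast
    rw [h1, h2, Real.sin_sub, Real.sin_add]
    ring
  -- convert to range sums
  rw [← Finset.Ico_add_one_right_eq_Icc, ← Finset.Ico_add_one_right_eq_Icc, Finset.sum_Ico_eq_sum_range,
    Finset.sum_Ico_eq_sum_range]
  simp only [Nat.succ_sub_one, Nat.add_sub_cancel]
  have key : ∀ i ∈ Finset.range (n+1),
      (1 - w i / w (i+1)) * a (i+1) ^ 2 + (1 - w (i+1) / w i) * a i ^ 2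
        ≤ (a (1+i) - a (1+i-1)) ^ 2 := by
    intro i hi
    rw [Finset.mem_range] at hi
    have e1 : 1 + i - 1 = i := by omega
    have e2 : 1 + i = i + 1 := by omega
    rw [e1, e2]
    rcases Nat.eq_zero_or_pos i with h | hip
    · subst h
      simp [hw0, h0, div_zero]
    rcases eq_or_lt_of_le (Nat.succ_le_of_lt hi) with h | hlt
    · -- i + 1 = n + 1, i.e. i = n
      have : i = n := by omega
      subst this
      simp [hwn1, hn1, div_zero]
    · -- interior case
      have hwi : 0 < w i := hwpos i hip (by omega)
      have hwi1 : 0 < w (i+1) := hwpos (i+1) (by omega) (by omega)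
      set s := w i / w (i+1) with hs
      set t := w (i+1) / w i with ht
      have hspos : 0 < s := div_pos hwi hwi1
      have hst : s * t = 1 := by
        rw [hs, ht]; field_simp
      nlinarith [sq_nonneg (s * a (i+1) - a i), hspos, hst,
        mul_pos hspos hspos, sq_nonneg (a (i+1) - a i)]
  calc 2 * (1 - Real.cos θ) * ∑ i ∈ Finset.range n, a (1+i) ^ 2
      = ∑ i ∈ Finset.range (n+1),
          ((1 - w i / w (i+1)) * a (i+1) ^ 2 + (1 - w (i+1) / w i) * a i ^ 2) := by
        rw [Finset.sum_add_distrib, Finset.sum_range_succ, Finset.sum_range_succ']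
        rw [hwn1, hn1, hw0]
        simp only [div_zero, h0, ne_eq, OfNat.ofNat_ne_zero, not_false_eq_true,
          zero_pow, mul_zero, add_zero]
        rw [← Finset.sum_add_distrib, Finset.mul_sum]
        apply Finset.sum_congr rfl
        intro i hi
        rw [Finset.mem_range] at hi
        have hwi1 : 0 < w (i+1) := hwpos (i+1) (by omega) (by omega)
        have hr := hrec i
        have e2 : 1 + i = i + 1 := by omega
        rw [e2]
        have hct : w i / w (i+1) + w (i+1+1) / w (i+1) = 2 * Real.cos θ := by
          rw [← add_div]
          rw [show i+1+1 = i+2 from rfl, hr]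
          field_simp
        linear_combination (a (i+1) ^ 2) * hct
    _ ≤ ∑ i ∈ Finset.range (n+1), (a (1+i) - a (1+i-1)) ^ 2 :=
        Finset.sum_le_sum key
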